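/- For every positive integer a, every real m ≥ 2, and all real z₁, z₂ < 1 with z₁ ≠ z₂: H_{a,1,1}(z₁,z₂;m) = (z₁·H_{a+1,1}(z₁;m) − z₂·H_{a+1,1}(z₂;m))/(z₁ − z₂); that is, H_{a,1,1} is the first divided difference of the function z ↦ z·H_{a+1,1}(z;m) at z₁, z₂. -/

import Mathlib

open MeasureTheory Set intervalIntegral Function

/-- One-variable hypergeometric family `H_{a,b}(z;m)` from the rearrangement lemma. -/
noncomputable def Hab (a b : ℕ) (m z : ℝ) : ℝ :=
  (Real.Gamma ((a : ℝ) + b + m / 2 - 2) / (Real.Gamma a * Real.Gamma b)) *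
    ∫ t in (0:ℝ)..1, (1 - t) ^ (a - 1) * t ^ (b - 1) *
      (1 - z * t) ^ (-((a : ℝ) + b + m / 2 - 2))
/-- Two-variable hypergeometric family `H_{a,b,c}(z₁,z₂;m)` from the rearrangement lemma. -/
noncomputable def Habc (a b c : ℕ) (m z₁ z₂ : ℝ) : ℝ :=
  (Real.Gamma ((a : ℝ) + b + c + m / 2 - 2) /
      (Real.Gamma a * Real.Gamma b * Real.Gamma c)) *
    ∫ t in (0:ℝ)..1, ∫ u in (0:ℝ)..(1 - t),
      (1 - t - u) ^ (a - 1) * t ^ (b - 1) * u ^ (c - 1) *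
        (1 - z₁ * t - z₂ * u) ^ (-((a : ℝ) + b + c + m / 2 - 2))

lemma base1_pos {z t : ℝ} (hz : z < 1) (ht0 : 0 ≤ t) (ht1 : t ≤ 1) : 0 < 1 - z * t := by
  nlinarith [mul_nonneg (sub_pos.2 hz).le ht0]

lemma base2_pos {z₁ z₂ t u : ℝ} (hz₁ : z₁ < 1) (hz₂ : z₂ < 1) (ht0 : 0 ≤ t) (hu0 : 0 ≤ u)
    (htu : t + u ≤ 1) : 0 < 1 - z₁ * t - z₂ * u := by
  rcases lt_or_ge (t + u) 1 with h | h
  · nlinarith [mul_nonneg (sub_pos.2 hz₁).le ht0, mul_nonneg (sub_pos.2 hz₂).le hu0]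
  · have htu1 : t + u = 1 := le_antisymm htu h
    rcases eq_or_lt_of_le ht0 with h0 | h0
    · nlinarith
    · nlinarith [mul_lt_mul_of_pos_right hz₁ h0, mul_nonneg (sub_pos.2 hz₂).le hu0]

/-- closed-form antiderivative lemma -/
lemma integral_linear_rpow {d C e : ℝ} (hd : d ≠ 1) (he : e ≠ 0) (r : ℝ)
    (hpos : ∀ t ∈ uIcc (0:ℝ) r, 0 < C - e * t) :
    ∫ t in (0:ℝ)..r, (C - e * t) ^ (-d) =
      ((C - e * r) ^ (1 - d) - C ^ (1 - d)) / ((1 - d) * (-e)) := by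
  have h1d : (1:ℝ) - d ≠ 0 := sub_ne_zero.2 (Ne.symm hd)
  have h := intervalIntegral.integral_eq_sub_of_hasDerivAt
    (f := fun t => (C - e * t) ^ (1 - d) / ((1 - d) * (-e)))
    (f' := fun t => (C - e * t) ^ (-d)) (a := (0:ℝ)) (b := r) ?_ ?_
  · rw [h]; rw [mul_zero, sub_zero]; ring
  · intro x hx
    have hb := hpos x hx
    have h1 : HasDerivAt (fun t : ℝ => C - e * t) (-e) x := by
      simpa using ((hasDerivAt_id x).const_mul e).const_sub C
    have h2 := h1.rpow_const (p := 1 - d) (Or.inl hb.ne')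
    have h3 := h2.div_const ((1 - d) * (-e))
    rw [show (1:ℝ) - d - 1 = -d by ring] at h3
    convert h3 using 1
    · rfl
    field_simp
  · apply ContinuousOn.intervalIntegrable
    apply ContinuousOn.rpow_const
    · fun_prop
    · intro x hx; exact Or.inl (hpos x hx).ne'

lemma Kint_integrable (a : ℕ) (d z : ℝ) (hz : z < 1) :
    IntervalIntegrable (fun t : ℝ => (1 - t) ^ (a - 1) * (1 - z * t) ^ (1 - d))
      volume 0 1 := by
  apply ContinuousOn.intervalIntegrable
  apply ContinuousOn.mul (by fun_prop)
  apply ContinuousOn.rpow_const (by fun_prop)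
  intro x hx
  rw [uIcc_of_le zero_le_one] at hx
  exact Or.inl (base1_pos hz hx.1 hx.2).ne'

lemma ibp_key (a : ℕ) (ha : 0 < a) (d : ℝ) (hd : 1 < d) (z : ℝ) (hz : z < 1) :
    (a : ℝ) * ∫ t in (0:ℝ)..1, (1 - t) ^ (a - 1) * (1 - z * t) ^ (1 - d)
      = (d - 1) * z * (∫ t in (0:ℝ)..1, (1 - t) ^ a * (1 - z * t) ^ (-d)) + 1 := by
  have hmem : ∀ x ∈ uIcc (0:ℝ) 1, 0 ≤ x ∧ x ≤ 1 := by
    intro x hx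
    rw [uIcc_of_le zero_le_one] at hx
    exact ⟨hx.1, hx.2⟩
  have hK := Kint_integrable a d z hz
  have hA : IntervalIntegrable (fun t : ℝ => (1 - t) ^ a * (1 - z * t) ^ (-d))
      volume 0 1 := by
    apply ContinuousOn.intervalIntegrable
    apply ContinuousOn.mul (by fun_prop)
    apply ContinuousOn.rpow_const (by fun_prop)
    intro x hx
    exact Or.inl (base1_pos hz (hmem x hx).1 (hmem x hx).2).ne'
  have key := intervalIntegral.integral_eq_sub_of_hasDerivAt
    (f := fun t => (1 - t) ^ a * (1 - z * t) ^ (1 - d))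
    (f' := fun t => (-(a:ℝ)) * ((1 - t) ^ (a - 1) * (1 - z * t) ^ (1 - d))
      + ((d - 1) * z) * ((1 - t) ^ a * (1 - z * t) ^ (-d))) (a := (0:ℝ)) (b := 1) ?_ ?_
  · have h0 : ((1:ℝ) - 1) ^ a * (1 - z * 1) ^ (1 - d) = 0 := by
      rw [sub_self, zero_pow ha.ne']; ring
    have h1 : ((1:ℝ) - 0) ^ a * (1 - z * 0) ^ (1 - d) = 1 := by
      norm_num
    rw [h0, h1] at key
    rw [intervalIntegral.integral_add ((hK.const_mul _)) ((hA.const_mul _)),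
      intervalIntegral.integral_const_mul, intervalIntegral.integral_const_mul] at key
    linarith [key]
  · intro x hx
    obtain ⟨hx0, hx1⟩ := hmem x hx
    have hb := base1_pos hz hx0 hx1
    have h1 : HasDerivAt (fun t : ℝ => 1 - t) (-1) x := by
      simpa using (hasDerivAt_id x).const_sub 1
    have hpow : HasDerivAt (fun t : ℝ => (1 - t) ^ a)
        ((a : ℝ) * (1 - x) ^ (a - 1) * (-1)) x := h1.pow a
    have h2 : HasDerivAt (fun t : ℝ => 1 - z * t) (-z) x := by
      simpa using ((hasDerivAt_id x).const_mul z).const_sub 1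
    have hrpow := h2.rpow_const (p := 1 - d) (Or.inl hb.ne')
    rw [show (1:ℝ) - d - 1 = -d by ring] at hrpow
    have := hpow.mul hrpow
    convert this using 1
    · rfl
    · funext t; rfl
    ring
  · exact (hK.const_mul _).add (hA.const_mul _)

lemma triangle_swap (F : ℝ → ℝ → ℝ) (hmeas : Measurable (uncurry F)) (C : ℝ)
    (hbd : ∀ t r : ℝ, 0 ≤ t → t < r → r ≤ 1 → |F t r| ≤ C) :
    (∫ t in (0:ℝ)..1, ∫ r in t..1, F t r) = ∫ r in (0:ℝ)..1, ∫ t in (0:ℝ)..r, F t r := by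
  set S : Set (ℝ × ℝ) := {p : ℝ × ℝ | p.1 < p.2} with hSdef
  have hS : MeasurableSet S := measurableSet_lt measurable_fst measurable_snd
  set μ : Measure ℝ := volume.restrict (Ioc (0:ℝ) 1) with hμ
  set g : ℝ → ℝ → ℝ := fun t r => Set.indicator S (uncurry F) (t, r) with hg
  have huncurry : uncurry g = Set.indicator S (uncurry F) := rfl
  have hint : Integrable (uncurry g) (μ.prod μ) := by
    rw [huncurry, hμ, Measure.prod_restrict]
    apply Measure.integrableOn_of_bounded (M := max C 0)
    · rw [Measure.prod_prod, Real.volume_Ioc]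
      norm_num
    · exact (hmeas.indicator hS).aestronglyMeasurable
    · filter_upwards [ae_restrict_mem (measurableSet_Ioc.prod measurableSet_Ioc)] with p hp
      by_cases hpS : p ∈ S
      · rw [Set.indicator_of_mem hpS, Real.norm_eq_abs]
        exact le_trans (hbd p.1 p.2 hp.1.1.le hpS hp.2.2) (le_max_left _ _)
      · rw [Set.indicator_of_notMem hpS]
        simpa using le_max_right C 0
  have hswap := MeasureTheory.integral_integral_swap (μ := μ) (ν := μ) (f := g) hint
  have hL : (∫ t in (0:ℝ)..1, ∫ r in t..1, F t r) = ∫ t, ∫ r, g t r ∂μ ∂μ := by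
    rw [intervalIntegral.integral_of_le zero_le_one]
    apply setIntegral_congr_fun measurableSet_Ioc
    intro t ht
    show (∫ r in t..1, F t r) = ∫ r, g t r ∂μ
    rw [intervalIntegral.integral_of_le ht.2]
    have : ∀ r : ℝ, g t r = Set.indicator (Ioi t) (F t) r := by
      intro r; simp [hg, hSdef, Set.indicator_apply, Set.mem_Ioi]
    simp_rw [this]
    rw [setIntegral_indicator measurableSet_Ioi, Set.Ioc_inter_Ioi,
      max_eq_right ht.1.le]
  have hR : (∫ r, ∫ t, g t r ∂μ ∂μ) = ∫ r in (0:ℝ)..1, ∫ t in (0:ℝ)..r, F t r := by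
    rw [intervalIntegral.integral_of_le zero_le_one]
    apply setIntegral_congr_fun measurableSet_Ioc
    intro r hr
    show (∫ t, g t r ∂μ) = ∫ t in (0:ℝ)..r, F t r
    have h1 : ∀ t : ℝ, g t r = Set.indicator (Iio r) (fun t => F t r) t := by
      intro t; simp [hg, hSdef, Set.indicator_apply, Set.mem_Iio]
    simp_rw [h1]
    rw [setIntegral_indicator measurableSet_Iio]
    have h2 : Ioc (0:ℝ) 1 ∩ Iio r = Ioo 0 r := by
      ext t
      simp only [Set.mem_inter_iff, Set.mem_Ioc, Set.mem_Iio, Set.mem_Ioo]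
      exact ⟨fun h => ⟨h.1.1, h.2⟩, fun h => ⟨⟨h.1, (h.2.le.trans hr.2)⟩, h.2⟩⟩
    rw [h2, ← integral_Ioc_eq_integral_Ioo, ← intervalIntegral.integral_of_le hr.1.le]
  rw [hL, hswap, hR]

set_option maxHeartbeats 1600000 in
/-- `H_{a,1,1}` is the first divided difference of `z ↦ z·H_{a+1,1}(z;m)`. -/
theorem stmt11 (a : ℕ) (ha : 0 < a) (m : ℝ) (hm : 2 ≤ m)
    (z₁ z₂ : ℝ) (hz₁ : z₁ < 1) (hz₂ : z₂ < 1) (hne : z₁ ≠ z₂) :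
    Habc a 1 1 m z₁ z₂ =
      (z₁ * Hab (a + 1) 1 m z₁ - z₂ * Hab (a + 1) 1 m z₂) / (z₁ - z₂) := by
  have ha' : (a : ℝ) ≠ 0 := Nat.cast_ne_zero.2 ha.ne'
  have ha1 : (1:ℝ) ≤ (a:ℝ) := by exact_mod_cast ha
  obtain ⟨d, hd⟩ : ∃ x : ℝ, x = (a : ℝ) + m / 2 := ⟨_, rfl⟩
  have hd1 : 1 < d := by rw [hd]; linarith
  have hd1' : d ≠ 1 := ne_of_gt hd1
  have hdm1 : d - 1 ≠ 0 := sub_ne_zero.2 hd1'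
  have hzz : z₁ - z₂ ≠ 0 := sub_ne_zero.2 hne
  have hΓ : Real.Gamma (a : ℝ) ≠ 0 :=
    (Real.Gamma_pos_of_pos (by exact_mod_cast ha)).ne'
  -- one-variable side
  have hHab : ∀ z : ℝ, Hab (a + 1) 1 m z =
      Real.Gamma d / ((a : ℝ) * Real.Gamma (a : ℝ)) *
        ∫ t in (0:ℝ)..1, (1 - t) ^ a * (1 - z * t) ^ (-d) := by
    intro z
    simp only [Hab, Nat.add_sub_cancel, Nat.sub_self, pow_zero, mul_one,
      Nat.cast_one, Real.Gamma_one]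
    rw [show ((a + 1 : ℕ) : ℝ) + 1 + m / 2 - 2 = d by push_cast; rw [hd]; ring]
    rw [show ((a + 1 : ℕ) : ℝ) = (a : ℝ) + 1 by push_cast; ring]
    rw [Real.Gamma_add_one ha']
  -- two-variable side prefactor simplification
  have hHabc : Habc a 1 1 m z₁ z₂ = Real.Gamma d / Real.Gamma (a : ℝ) *
      ∫ t in (0:ℝ)..1, ∫ u in (0:ℝ)..(1 - t),
        (1 - t - u) ^ (a - 1) * (1 - z₁ * t - z₂ * u) ^ (-d) := by
    simp only [Habc, Nat.sub_self, pow_zero, mul_one, Nat.cast_one, Real.Gamma_one]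
    rw [show (a : ℝ) + 1 + 1 + m / 2 - 2 = d by rw [hd]; ring]
  -- main computation of the double integral
  have hstep2 : ∀ t : ℝ, (∫ u in (0:ℝ)..(1 - t),
      (1 - t - u) ^ (a - 1) * (1 - z₁ * t - z₂ * u) ^ (-d))
      = ∫ r in t..1, (1 - r) ^ (a - 1) * ((1 - z₂ * r) - (z₁ - z₂) * t) ^ (-d) := by
    intro t
    have h1 : (∫ u in (0:ℝ)..(1 - t),
        (1 - t - u) ^ (a - 1) * (1 - z₁ * t - z₂ * u) ^ (-d))
        = ∫ u in (0:ℝ)..(1 - t),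
          (fun r : ℝ => (1 - r) ^ (a - 1) * ((1 - z₂ * r) - (z₁ - z₂) * t) ^ (-d)) (t + u) := by
      apply intervalIntegral.integral_congr
      intro u _
      show (1 - t - u) ^ (a - 1) * (1 - z₁ * t - z₂ * u) ^ (-d)
        = (1 - (t + u)) ^ (a - 1) * ((1 - z₂ * (t + u)) - (z₁ - z₂) * t) ^ (-d)
      rw [show 1 - t - u = 1 - (t + u) by ring,
        show 1 - z₁ * t - z₂ * u = (1 - z₂ * (t + u)) - (z₁ - z₂) * t by ring]
    rw [h1]
    refine (intervalIntegral.integral_comp_add_left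
      (fun r : ℝ => (1 - r) ^ (a - 1) * ((1 - z₂ * r) - (z₁ - z₂) * t) ^ (-d)) t).trans ?_
    rw [show t + (0:ℝ) = t by ring, show t + (1 - t) = (1:ℝ) by ring]
  obtain ⟨M, hMdef⟩ : ∃ x : ℝ, x = max z₁ (max z₂ 0) := ⟨_, rfl⟩
  have hM1 : M < 1 := by rw [hMdef]; exact max_lt hz₁ (max_lt hz₂ one_pos)
  have hM0 : (0:ℝ) ≤ M := by rw [hMdef]; exact le_trans (le_max_right z₂ 0) (le_max_right _ _)
  have hmeas : Measurable (uncurry fun t r : ℝ =>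
      (1 - r) ^ (a - 1) * ((1 - z₂ * r) - (z₁ - z₂) * t) ^ (-d)) := by
    unfold Function.uncurry
    measurability
  have hbd : ∀ t r : ℝ, 0 ≤ t → t < r → r ≤ 1 →
      |(1 - r) ^ (a - 1) * ((1 - z₂ * r) - (z₁ - z₂) * t) ^ (-d)| ≤ (1 - M) ^ (-d) := by
    intro t r ht htr hr1
    have hbeq : (1 - z₂ * r) - (z₁ - z₂) * t = 1 - z₁ * t - z₂ * (r - t) := by ring
    have hbpos : 0 < (1 - z₂ * r) - (z₁ - z₂) * t := by
      rw [hbeq]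
      exact base2_pos hz₁ hz₂ ht (by linarith) (by linarith)
    have hz₁M : z₁ ≤ M := by rw [hMdef]; exact le_max_left _ _
    have hz₂M : z₂ ≤ M := by rw [hMdef]; exact le_trans (le_max_left z₂ 0) (le_max_right _ _)
    have hbge : 1 - M ≤ (1 - z₂ * r) - (z₁ - z₂) * t := by
      nlinarith [mul_nonneg (sub_nonneg.2 hz₁M) ht,
        mul_nonneg (sub_nonneg.2 hz₂M) (by linarith : (0:ℝ) ≤ r - t),
        mul_nonneg hM0 (by linarith : (0:ℝ) ≤ 1 - r)]
    have hrpow : ((1 - z₂ * r) - (z₁ - z₂) * t) ^ (-d) ≤ (1 - M) ^ (-d) :=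
      Real.rpow_le_rpow_of_nonpos (by linarith) hbge (by linarith)
    have hpow1 : (1 - r) ^ (a - 1) ≤ 1 := by
      apply pow_le_one₀ (by linarith) (by linarith)
    have hpownn : (0:ℝ) ≤ (1 - r) ^ (a - 1) := pow_nonneg (by linarith) _
    have hrpnn : (0:ℝ) ≤ ((1 - z₂ * r) - (z₁ - z₂) * t) ^ (-d) := Real.rpow_nonneg hbpos.le _
    rw [abs_of_nonneg (mul_nonneg hpownn hrpnn)]
    calc (1 - r) ^ (a - 1) * ((1 - z₂ * r) - (z₁ - z₂) * t) ^ (-d)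
        ≤ 1 * ((1 - M) ^ (-d)) := mul_le_mul hpow1 hrpow hrpnn one_pos.le
      _ = (1 - M) ^ (-d) := one_mul _
  have hswap' : (∫ t in (0:ℝ)..1, ∫ r in t..1,
        (1 - r) ^ (a - 1) * ((1 - z₂ * r) - (z₁ - z₂) * t) ^ (-d))
      = ∫ r in (0:ℝ)..1, ∫ t in (0:ℝ)..r,
        (1 - r) ^ (a - 1) * ((1 - z₂ * r) - (z₁ - z₂) * t) ^ (-d) :=
    triangle_swap _ hmeas _ hbd
  have h4 : (∫ r in (0:ℝ)..1, ∫ t in (0:ℝ)..r,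
        (1 - r) ^ (a - 1) * ((1 - z₂ * r) - (z₁ - z₂) * t) ^ (-d))
      = ∫ r in (0:ℝ)..1, (1 / ((d - 1) * (z₁ - z₂))) *
          ((1 - r) ^ (a - 1) * (1 - z₁ * r) ^ (1 - d)
            - (1 - r) ^ (a - 1) * (1 - z₂ * r) ^ (1 - d)) := by
    apply intervalIntegral.integral_congr
    intro r hr
    rw [uIcc_of_le zero_le_one] at hr
    show (∫ t in (0:ℝ)..r, (1 - r) ^ (a - 1) * ((1 - z₂ * r) - (z₁ - z₂) * t) ^ (-d)) = _
    have hpos : ∀ x ∈ uIcc (0:ℝ) r, 0 < (1 - z₂ * r) - (z₁ - z₂) * x := by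
      intro x hx
      rw [uIcc_of_le hr.1] at hx
      rw [show (1 - z₂ * r) - (z₁ - z₂) * x = 1 - z₁ * x - z₂ * (r - x) by ring]
      exact base2_pos hz₁ hz₂ hx.1 (by linarith [hx.2]) (by linarith [hr.2])
    rw [intervalIntegral.integral_const_mul,
      integral_linear_rpow hd1' hzz r hpos,
      show (1 - z₂ * r) - (z₁ - z₂) * r = 1 - z₁ * r by ring]
    rw [show ((1:ℝ) - d) * (-(z₁ - z₂)) = (d - 1) * (z₁ - z₂) by ring]
    field_simp
  have h5 : (∫ r in (0:ℝ)..1, (1 / ((d - 1) * (z₁ - z₂))) *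
        ((1 - r) ^ (a - 1) * (1 - z₁ * r) ^ (1 - d)
          - (1 - r) ^ (a - 1) * (1 - z₂ * r) ^ (1 - d)))
      = ((∫ t in (0:ℝ)..1, (1 - t) ^ (a - 1) * (1 - z₁ * t) ^ (1 - d))
          - ∫ t in (0:ℝ)..1, (1 - t) ^ (a - 1) * (1 - z₂ * t) ^ (1 - d))
          / ((d - 1) * (z₁ - z₂)) := by
    rw [intervalIntegral.integral_const_mul,
      intervalIntegral.integral_sub (Kint_integrable a d z₁ hz₁) (Kint_integrable a d z₂ hz₂)]
    ring
  -- the key integral identities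
  have hK1 := ibp_key a ha d hd1 z₁ hz₁
  have hK2 := ibp_key a ha d hd1 z₂ hz₂
  -- put everything together
  rw [hHabc, hHab z₁, hHab z₂]
  have hI : (∫ t in (0:ℝ)..1, ∫ u in (0:ℝ)..(1 - t),
      (1 - t - u) ^ (a - 1) * (1 - z₁ * t - z₂ * u) ^ (-d))
      = ((∫ t in (0:ℝ)..1, (1 - t) ^ (a - 1) * (1 - z₁ * t) ^ (1 - d))
          - ∫ t in (0:ℝ)..1, (1 - t) ^ (a - 1) * (1 - z₂ * t) ^ (1 - d))
          / ((d - 1) * (z₁ - z₂)) := by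
    calc (∫ t in (0:ℝ)..1, ∫ u in (0:ℝ)..(1 - t),
        (1 - t - u) ^ (a - 1) * (1 - z₁ * t - z₂ * u) ^ (-d))
        = ∫ t in (0:ℝ)..1, ∫ r in t..1,
            (1 - r) ^ (a - 1) * ((1 - z₂ * r) - (z₁ - z₂) * t) ^ (-d) := by
          apply intervalIntegral.integral_congr
          exact fun t _ => hstep2 t
      _ = _ := hswap'.trans (h4.trans h5)
  rw [hI]
  have hK1' : (∫ t in (0:ℝ)..1, (1 - t) ^ (a - 1) * (1 - z₁ * t) ^ (1 - d))
      = ((d - 1) * z₁ * (∫ t in (0:ℝ)..1, (1 - t) ^ a * (1 - z₁ * t) ^ (-d)) + 1) / (a : ℝ) := by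
    rw [eq_div_iff ha']; linarith [hK1]
  have hK2' : (∫ t in (0:ℝ)..1, (1 - t) ^ (a - 1) * (1 - z₂ * t) ^ (1 - d))
      = ((d - 1) * z₂ * (∫ t in (0:ℝ)..1, (1 - t) ^ a * (1 - z₂ * t) ^ (-d)) + 1) / (a : ℝ) := by
    rw [eq_div_iff ha']; linarith [hK2]
  rw [hK1', hK2']
  field_simp
  ring
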